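/- Let G be a connected weighted graph with nonnegative edge lengths and 𝒢 its continuous graph. For edges aa' and bb' of G, the maximum over points p on edge aa' and q on edge bb' of the continuous distance d_𝒢(p,q) equals ℓ(W(aa',bb'))/2, where W(aa',bb') is a shortest closed walk passing through all interior points of aa' and bb'. -/

import Mathlib

open SimpleGraph

variable {V : Type*}

/-- Length of a walk in a weighted graph: the sum of the lengths of its edges,
counted with multiplicity. -/
noncomputable def walkLen (ℓ : V → V → ℝ) {G : SimpleGraph V} {a b : V} (w : G.Walk a b) : ℝ :=
  (w.darts.map (fun d => ℓ d.toProd.1 d.toProd.2)).sum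

/-- Shortest-path distance in the weighted graph: infimum of walk lengths. -/
noncomputable def gdist (G : SimpleGraph V) (ℓ : V → V → ℝ) (a b : V) : ℝ :=
  sInf {x | ∃ w : G.Walk a b, walkLen ℓ w = x}

/-- Endpoint (`u` or `v`) of the edge carrying a point `(u, v, lam)` of the continuous graph. -/
def ept (p : V × V × ℝ) : Bool → V := fun i => if i then p.2.1 else p.1

/-- Offset of a point `(u, v, lam)` of the continuous graph to the chosen endpoint of its edge. -/
def off (ℓ : V → V → ℝ) (p : V × V × ℝ) : Bool → ℝ :=
  fun i => if i then ℓ p.1 p.2.1 - p.2.2 else p.2.2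

/-- Geodesic distance between two points of the continuous graph `𝒢` of `G`:
a point `(u, v, lam)` lies on edge `uv` at distance `lam` along the edge from `u`.
It is the infimum of the lengths of all connections: leave the first edge through one of
its endpoints, walk in `G`, and enter the second edge through one of its endpoints;
or, if both points lie on the same edge, travel directly along that edge. -/
noncomputable def pdist (G : SimpleGraph V) (ℓ : V → V → ℝ) (p q : V × V × ℝ) : ℝ :=
  sInf ({x | ∃ (i j : Bool) (w : G.Walk (ept p i) (ept q j)),
        x = off ℓ p i + walkLen ℓ w + off ℓ q j}
    ∪ {x | (p.1, p.2.1) = (q.1, q.2.1) ∧ x = |p.2.2 - q.2.2|}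
    ∪ {x | (p.1, p.2.1) = (q.2.1, q.1) ∧ x = |p.2.2 - (ℓ q.1 q.2.1 - q.2.2)|})

/-! ### Auxiliary lemmas about `walkLen` and `gdist` -/

section auxlen
variable {G : SimpleGraph V} {ℓ : V → V → ℝ}

lemma walkLen_nil {a : V} : walkLen ℓ (Walk.nil : G.Walk a a) = 0 := rfl

lemma walkLen_cons {a b c : V} (h : G.Adj a b) (w : G.Walk b c) :
    walkLen ℓ (Walk.cons h w) = ℓ a b + walkLen ℓ w := by
  simp [walkLen]

lemma walkLen_append {a b c : V} (w1 : G.Walk a b) (w2 : G.Walk b c) :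
    walkLen ℓ (w1.append w2) = walkLen ℓ w1 + walkLen ℓ w2 := by
  simp [walkLen, Walk.darts_append]

lemma walkLen_nonneg (hnn : ∀ u v, 0 ≤ ℓ u v) {a b : V} (w : G.Walk a b) :
    0 ≤ walkLen ℓ w := by
  apply List.sum_nonneg
  intro x hx
  simp only [List.mem_map] at hx
  obtain ⟨d, -, rfl⟩ := hx
  exact hnn _ _

lemma walkLen_reverse (hsym : ∀ u v, ℓ u v = ℓ v u) {a b : V} (w : G.Walk a b) :
    walkLen ℓ w.reverse = walkLen ℓ w := by
  simp only [walkLen, Walk.darts_reverse, List.map_reverse, List.sum_reverse, List.map_map]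
  congr 1
  apply List.map_congr_left
  intro d _
  exact (hsym _ _).symm

lemma gdist_le (a b : V) (hnn : ∀ u v, 0 ≤ ℓ u v) (w : G.Walk a b) :
    gdist G ℓ a b ≤ walkLen ℓ w :=
  csInf_le ⟨0, fun x ⟨w', hw'⟩ => hw' ▸ walkLen_nonneg hnn w'⟩ ⟨w, rfl⟩

lemma gdist_nonneg (hG : G.Connected) (hnn : ∀ u v, 0 ≤ ℓ u v) (a b : V) :
    0 ≤ gdist G ℓ a b := by
  obtain ⟨w⟩ := hG.preconnected a b
  exact le_csInf ⟨_, w, rfl⟩ (fun x ⟨w', hw'⟩ => hw' ▸ walkLen_nonneg hnn w')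

lemma exists_walk_lt (hG : G.Connected) (a b : V) {ε : ℝ} (hε : 0 < ε) :
    ∃ w : G.Walk a b, walkLen ℓ w < gdist G ℓ a b + ε := by
  obtain ⟨w⟩ := hG.preconnected a b
  obtain ⟨x, ⟨w', hw'⟩, hx⟩ := exists_lt_of_csInf_lt (s := {x | ∃ w : G.Walk a b, walkLen ℓ w = x})
    ⟨_, w, rfl⟩ (lt_add_of_pos_right _ hε)
  exact ⟨w', hw' ▸ hx⟩

lemma gdist_self (hG : G.Connected) (hnn : ∀ u v, 0 ≤ ℓ u v) (a : V) : gdist G ℓ a a = 0 :=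
  le_antisymm (le_of_le_of_eq (gdist_le a a hnn Walk.nil) walkLen_nil) (gdist_nonneg hG hnn a a)

lemma gdist_triangle (hG : G.Connected) (hnn : ∀ u v, 0 ≤ ℓ u v) (a b c : V) :
    gdist G ℓ a c ≤ gdist G ℓ a b + gdist G ℓ b c := by
  apply le_of_forall_pos_le_add
  intro ε hε
  obtain ⟨w1, h1⟩ := exists_walk_lt (ℓ := ℓ) hG a b (half_pos hε)
  obtain ⟨w2, h2⟩ := exists_walk_lt (ℓ := ℓ) hG b c (half_pos hε)
  calc gdist G ℓ a c ≤ walkLen ℓ (w1.append w2) := gdist_le a c hnn _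
    _ = walkLen ℓ w1 + walkLen ℓ w2 := walkLen_append w1 w2
    _ ≤ _ := by linarith

lemma gdist_symm (hG : G.Connected) (hsym : ∀ u v, ℓ u v = ℓ v u) (hnn : ∀ u v, 0 ≤ ℓ u v)
    (a b : V) : gdist G ℓ a b = gdist G ℓ b a := by
  have key : ∀ u v : V, gdist G ℓ u v ≤ gdist G ℓ v u := by
    intro u v
    apply le_of_forall_pos_le_add
    intro ε hε
    obtain ⟨w, hw⟩ := exists_walk_lt (ℓ := ℓ) hG v u hε
    calc gdist G ℓ u v ≤ walkLen ℓ w.reverse := gdist_le u v hnn _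
      _ = walkLen ℓ w := walkLen_reverse hsym w
      _ ≤ _ := le_of_lt hw
  exact le_antisymm (key a b) (key b a)

lemma gdist_le_len (hnn : ∀ u v, 0 ≤ ℓ u v) {a b : V} (h : G.Adj a b) :
    gdist G ℓ a b ≤ ℓ a b := by
  have := gdist_le a b hnn (Walk.cons h Walk.nil)
  rwa [walkLen_cons, walkLen_nil, add_zero] at this

lemma walk_split {x y : V} (w : G.Walk x y) {e : Sym2 V} (he : e ∈ w.edges) :
    ∃ (u v : V) (_ : G.Adj u v) (w1 : G.Walk x u) (w2 : G.Walk v y),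
      s(u, v) = e ∧ walkLen ℓ w = walkLen ℓ w1 + ℓ u v + walkLen ℓ w2 ∧
      ∀ e' ∈ w.edges, e' = e ∨ e' ∈ w1.edges ∨ e' ∈ w2.edges := by
  induction w with
  | nil => simp at he
  | @cons s t y2 h p ih =>
    rw [Walk.edges_cons, List.mem_cons] at he
    by_cases hcase : e = s(s, t)
    · refine ⟨_, _, h, Walk.nil, p, hcase.symm, ?_, ?_⟩
      · rw [walkLen_cons, walkLen_nil]; ring
      · intro e' he'
        rw [Walk.edges_cons, List.mem_cons] at he'
        rcases he' with h1 | h1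
        · exact Or.inl (h1.trans hcase.symm)
        · exact Or.inr (Or.inr h1)
    · have he2 : e ∈ p.edges := he.resolve_left hcase
      obtain ⟨u, v, hu, w1, w2, heq, hlen, hmem⟩ := ih he2
      refine ⟨u, v, hu, Walk.cons h w1, w2, heq, ?_, ?_⟩
      · rw [walkLen_cons, walkLen_cons, hlen]; ring
      · intro e' he'
        rw [Walk.edges_cons, List.mem_cons] at he'
        rcases he' with h1 | h1
        · right; left; rw [Walk.edges_cons, h1]; exact List.mem_cons_self
        · rcases hmem e' h1 with h2 | h2 | h2
          · exact Or.inl h2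
          · exact Or.inr (Or.inl (by rw [Walk.edges_cons]; exact List.mem_cons_of_mem _ h2))
          · exact Or.inr (Or.inr h2)

end auxlen

/-! ### Lower bounds for closed walks through given edges -/

section cw
variable {G : SimpleGraph V} {ℓ : V → V → ℝ}

lemma closed_lb_same (hG : G.Connected) (hsym : ∀ u v, ℓ u v = ℓ v u) (hnn : ∀ u v, 0 ≤ ℓ u v)
    (a a' : V) {r : V} (w : G.Walk r r) (hea : s(a, a') ∈ w.edges) :
    ℓ a a' + gdist G ℓ a a' ≤ walkLen ℓ w := by
  obtain ⟨u, v, huv, w1, w2, heq, hlen, -⟩ := walk_split (ℓ := ℓ) w hea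
  have g1 : gdist G ℓ v u ≤ walkLen ℓ w2 + walkLen ℓ w1 := by
    have := gdist_le v u hnn (w2.append w1)
    rwa [walkLen_append] at this
  have key : ℓ u v = ℓ a a' ∧ gdist G ℓ a a' ≤ gdist G ℓ v u := by
    rcases Sym2.eq_iff.mp heq with ⟨h1, h2⟩ | ⟨h1, h2⟩ <;> rw [h1, h2]
    · rw [gdist_symm hG hsym hnn a' a]
      exact ⟨rfl, le_rfl⟩
    · rw [hsym a' a]
      exact ⟨rfl, le_rfl⟩
  obtain ⟨k1, k2⟩ := key
  linarith

lemma closed_lb_distinct (hG : G.Connected) (hsym : ∀ u v, ℓ u v = ℓ v u)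
    (hnn : ∀ u v, 0 ≤ ℓ u v) (a a' b b' : V) (hne : s(a, a') ≠ s(b, b')) {r : V}
    (w : G.Walk r r) (hea : s(a, a') ∈ w.edges) (heb : s(b, b') ∈ w.edges) :
    ℓ a a' + ℓ b b' +
      min (gdist G ℓ a b' + gdist G ℓ a' b) (gdist G ℓ a b + gdist G ℓ a' b')
      ≤ walkLen ℓ w := by
  have pair : ∀ u v s t : V, s(u, v) = s(a, a') → s(s, t) = s(b, b') →
      ℓ u v = ℓ a a' ∧ ℓ s t = ℓ b b' ∧
      min (gdist G ℓ a b' + gdist G ℓ a' b) (gdist G ℓ a b + gdist G ℓ a' b')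
        ≤ gdist G ℓ v s + gdist G ℓ t u := by
    intro u v s t h1 h2
    have hmin1 := min_le_left (gdist G ℓ a b' + gdist G ℓ a' b) (gdist G ℓ a b + gdist G ℓ a' b')
    have hmin2 := min_le_right (gdist G ℓ a b' + gdist G ℓ a' b) (gdist G ℓ a b + gdist G ℓ a' b')
    rcases Sym2.eq_iff.mp h1 with ⟨h1a, h1b⟩ | ⟨h1a, h1b⟩ <;>
      rcases Sym2.eq_iff.mp h2 with ⟨h2a, h2b⟩ | ⟨h2a, h2b⟩ <;>
      rw [h1a, h1b, h2a, h2b]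
    · refine ⟨rfl, rfl, ?_⟩
      rw [gdist_symm hG hsym hnn b' a]; linarith
    · refine ⟨rfl, hsym b' b, ?_⟩
      rw [gdist_symm hG hsym hnn b a]; linarith
    · refine ⟨hsym a' a, rfl, ?_⟩
      rw [gdist_symm hG hsym hnn b' a']; linarith
    · refine ⟨hsym a' a, hsym b' b, ?_⟩
      rw [gdist_symm hG hsym hnn b a']; linarith
  obtain ⟨u, v, huv, w1, w2, heq, hlen, hmem⟩ := walk_split (ℓ := ℓ) w hea
  rcases hmem s(b, b') heb with h | h | h
  · exact absurd h.symm hne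
  · obtain ⟨s, t, hst, w3, w4, heq2, hlen2, -⟩ := walk_split (ℓ := ℓ) w1 h
    obtain ⟨e1, e2, e3⟩ := pair u v s t heq heq2
    have g1 : gdist G ℓ t u ≤ walkLen ℓ w4 := gdist_le t u hnn w4
    have g2 : gdist G ℓ v s ≤ walkLen ℓ w2 + walkLen ℓ w3 := by
      have := gdist_le v s hnn (w2.append w3)
      rwa [walkLen_append] at this
    linarith
  · obtain ⟨s, t, hst, w3, w4, heq2, hlen2, -⟩ := walk_split (ℓ := ℓ) w2 h
    obtain ⟨e1, e2, e3⟩ := pair u v s t heq heq2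
    have g1 : gdist G ℓ v s ≤ walkLen ℓ w3 := gdist_le v s hnn w3
    have g2 : gdist G ℓ t u ≤ walkLen ℓ w4 + walkLen ℓ w1 := by
      have := gdist_le t u hnn (w4.append w1)
      rwa [walkLen_append] at this
    linarith

end cw

/-! ### Lemmas about `pdist` -/

section pd
variable {G : SimpleGraph V} {ℓ : V → V → ℝ}

def pset (G : SimpleGraph V) (ℓ : V → V → ℝ) (p q : V × V × ℝ) : Set ℝ :=
  ({x | ∃ (i j : Bool) (w : G.Walk (ept p i) (ept q j)),
        x = off ℓ p i + walkLen ℓ w + off ℓ q j}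
    ∪ {x | (p.1, p.2.1) = (q.1, q.2.1) ∧ x = |p.2.2 - q.2.2|}
    ∪ {x | (p.1, p.2.1) = (q.2.1, q.1) ∧ x = |p.2.2 - (ℓ q.1 q.2.1 - q.2.2)|})

lemma pdist_eq (p q : V × V × ℝ) : pdist G ℓ p q = sInf (pset G ℓ p q) := rfl

lemma off_nonneg (p : V × V × ℝ) (h0 : 0 ≤ p.2.2) (h1 : p.2.2 ≤ ℓ p.1 p.2.1) (i : Bool) :
    0 ≤ off ℓ p i := by
  cases i <;> simp [off] <;> linarith

lemma pset_bddBelow (hnn : ∀ u v, 0 ≤ ℓ u v) (p q : V × V × ℝ)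
    (hp0 : 0 ≤ p.2.2) (hp1 : p.2.2 ≤ ℓ p.1 p.2.1)
    (hq0 : 0 ≤ q.2.2) (hq1 : q.2.2 ≤ ℓ q.1 q.2.1) :
    BddBelow (pset G ℓ p q) := by
  refine ⟨0, ?_⟩
  rintro x ((⟨i, j, w, rfl⟩ | ⟨-, rfl⟩) | ⟨-, rfl⟩)
  · have := walkLen_nonneg (G := G) hnn w
    have := off_nonneg (ℓ := ℓ) p hp0 hp1 i
    have := off_nonneg (ℓ := ℓ) q hq0 hq1 j
    linarith
  · exact abs_nonneg _
  · exact abs_nonneg _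

lemma pdist_le_mem (hnn : ∀ u v, 0 ≤ ℓ u v) (p q : V × V × ℝ)
    (hp0 : 0 ≤ p.2.2) (hp1 : p.2.2 ≤ ℓ p.1 p.2.1)
    (hq0 : 0 ≤ q.2.2) (hq1 : q.2.2 ≤ ℓ q.1 q.2.1)
    {x : ℝ} (hx : x ∈ pset G ℓ p q) : pdist G ℓ p q ≤ x :=
  csInf_le (pset_bddBelow hnn p q hp0 hp1 hq0 hq1) hx

lemma pdist_le_gdist (hG : G.Connected) (hnn : ∀ u v, 0 ≤ ℓ u v) (p q : V × V × ℝ)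
    (hp0 : 0 ≤ p.2.2) (hp1 : p.2.2 ≤ ℓ p.1 p.2.1)
    (hq0 : 0 ≤ q.2.2) (hq1 : q.2.2 ≤ ℓ q.1 q.2.1) (i j : Bool) :
    pdist G ℓ p q ≤ off ℓ p i + gdist G ℓ (ept p i) (ept q j) + off ℓ q j := by
  apply le_of_forall_pos_le_add
  intro ε hε
  obtain ⟨w, hw⟩ := exists_walk_lt (ℓ := ℓ) hG (ept p i) (ept q j) hε
  have h1 : pdist G ℓ p q ≤ off ℓ p i + walkLen ℓ w + off ℓ q j :=
    pdist_le_mem hnn p q hp0 hp1 hq0 hq1 (Or.inl (Or.inl ⟨i, j, w, rfl⟩))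
  linarith

lemma le_pdist (hG : G.Connected) (hnn : ∀ u v, 0 ≤ ℓ u v) (p q : V × V × ℝ) (c : ℝ)
    (h0 : ∀ i j : Bool, c ≤ off ℓ p i + gdist G ℓ (ept p i) (ept q j) + off ℓ q j)
    (h1 : (p.1, p.2.1) = (q.1, q.2.1) → c ≤ |p.2.2 - q.2.2|)
    (h2 : (p.1, p.2.1) = (q.2.1, q.1) → c ≤ |p.2.2 - (ℓ q.1 q.2.1 - q.2.2)|) :
    c ≤ pdist G ℓ p q := by
  rw [pdist_eq]
  obtain ⟨w⟩ := hG.preconnected (ept p false) (ept q false)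
  have hmem : (off ℓ p false + walkLen ℓ w + off ℓ q false) ∈ pset G ℓ p q :=
    Or.inl (Or.inl ⟨false, false, w, rfl⟩)
  apply le_csInf ⟨_, hmem⟩
  rintro x ((⟨i, j, w', rfl⟩ | ⟨hc, rfl⟩) | ⟨hc, rfl⟩)
  · have := gdist_le (G := G) (ℓ := ℓ) (ept p i) (ept q j) hnn w'
    have := h0 i j
    linarith
  · exact h1 hc
  · exact h2 hc

end pd

/-! ### The algebraic feasibility lemma -/

lemma feas (L1 L2 d1 d2 d3 d4 : ℝ) (hL1 : 0 ≤ L1) (hL2 : 0 ≤ L2)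
    (t13 : d1 ≤ L1 + d3) (t31 : d3 ≤ L1 + d1) (t12 : d2 ≤ d1 + L2) (t21 : d1 ≤ d2 + L2)
    (t34 : d4 ≤ d3 + L2) (t43 : d3 ≤ d4 + L2) (t24 : d4 ≤ d2 + L1) (t42 : d2 ≤ d4 + L1)
    (hA : d2 + d3 ≤ d1 + d4) :
    ∃ lam mu : ℝ, 0 ≤ lam ∧ lam ≤ L1 ∧ 0 ≤ mu ∧ mu ≤ L2 ∧
      lam + d2 + (L2 - mu) = (L1 + L2 + d2 + d3) / 2 ∧
      (L1 - lam) + d3 + mu = (L1 + L2 + d2 + d3) / 2 ∧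
      (L1 + L2 + d2 + d3) / 2 ≤ lam + d1 + mu ∧
      (L1 + L2 + d2 + d3) / 2 ≤ (L1 - lam) + d4 + (L2 - mu) := by
  set mu := max 0 ((L2 + d2 - d1) / 2) with hmu
  refine ⟨mu + (L1 - L2 + d3 - d2) / 2, mu, ?_, ?_, le_max_left _ _, ?_, by ring, by ring, ?_, ?_⟩
  · rcases max_cases 0 ((L2 + d2 - d1) / 2) with ⟨h, h0⟩ | ⟨h, h0⟩ <;> rw [hmu, h] <;> linarith
  · rcases max_cases 0 ((L2 + d2 - d1) / 2) with ⟨h, h0⟩ | ⟨h, h0⟩ <;> rw [hmu, h] <;> linarith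
  · rcases max_cases 0 ((L2 + d2 - d1) / 2) with ⟨h, h0⟩ | ⟨h, h0⟩ <;> rw [hmu, h] <;> linarith
  · have : (L2 + d2 - d1) / 2 ≤ mu := le_max_right _ _
    linarith
  · rcases max_cases 0 ((L2 + d2 - d1) / 2) with ⟨h, h0⟩ | ⟨h, h0⟩ <;> rw [hmu, h] <;> linarith

/-- For edges `aa'` and `bb'` of a connected weighted graph `G` with nonnegative edge
lengths, the maximum over points `p` on edge `aa'` and `q` on edge `bb'` of the
continuous distance `d_𝒢(p,q)` equals `ℓ(W(aa',bb'))/2`, where `W(aa',bb')` is a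
shortest closed walk passing through all interior points of `aa'` and `bb'`
(i.e. traversing each of the two edges in full at least once). -/
theorem max_dist_eq_half_closed_walk (G : SimpleGraph V) (hG : G.Connected)
    (ℓ : V → V → ℝ) (hsym : ∀ u v, ℓ u v = ℓ v u) (hnn : ∀ u v, 0 ≤ ℓ u v)
    (a a' b b' : V) (ha : G.Adj a a') (hb : G.Adj b b') :
    sSup {x | ∃ lam mu : ℝ, lam ∈ Set.Icc 0 (ℓ a a') ∧ mu ∈ Set.Icc 0 (ℓ b b') ∧
        pdist G ℓ (a, a', lam) (b, b', mu) = x}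
    = (sInf {x | ∃ (r : V) (w : G.Walk r r),
        s(a, a') ∈ w.edges ∧ s(b, b') ∈ w.edges ∧ walkLen ℓ w = x}) / 2 := by
    -- MAIN BODY (to be appended in place of sorry)
  have hL1 : 0 ≤ ℓ a a' := hnn a a'
  have hL2 : 0 ≤ ℓ b b' := hnn b b'
  by_cases hsame : s(a, a') = s(b, b')
  · -- the two edges coincide
    rcases Sym2.eq_iff.mp hsame with ⟨h1, h2⟩ | ⟨h1, h2⟩
    · subst h1; subst h2
      have hd0 : 0 ≤ gdist G ℓ a a' := gdist_nonneg hG hnn a a'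
      have hdL : gdist G ℓ a a' ≤ ℓ a a' := gdist_le_len hnn ha
      have hzaa : gdist G ℓ a a = 0 := gdist_self hG hnn a
      have hzbb : gdist G ℓ a' a' = 0 := gdist_self hG hnn a'
      have hgs : gdist G ℓ a' a = gdist G ℓ a a' := gdist_symm hG hsym hnn a' a
      have hRlb : ∀ x ∈ {x | ∃ (r : V) (w : G.Walk r r),
          s(a, a') ∈ w.edges ∧ s(a, a') ∈ w.edges ∧ walkLen ℓ w = x},
          ℓ a a' + gdist G ℓ a a' ≤ x := by
        rintro x ⟨r, w, hea, -, rfl⟩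
        exact closed_lb_same hG hsym hnn a a' w hea
      have hSRbdd : BddBelow {x | ∃ (r : V) (w : G.Walk r r),
          s(a, a') ∈ w.edges ∧ s(a, a') ∈ w.edges ∧ walkLen ℓ w = x} :=
        ⟨0, by rintro x ⟨r, w, -, -, rfl⟩; exact walkLen_nonneg hnn w⟩
      have hmk : ∀ w2 : G.Walk a' a, (ℓ a a' + walkLen ℓ w2) ∈
          {x | ∃ (r : V) (w : G.Walk r r),
            s(a, a') ∈ w.edges ∧ s(a, a') ∈ w.edges ∧ walkLen ℓ w = x} := by
        intro w2
        refine ⟨a, Walk.cons ha w2, ?_, ?_, ?_⟩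
        · rw [Walk.edges_cons]; exact List.mem_cons_self
        · rw [Walk.edges_cons]; exact List.mem_cons_self
        · exact walkLen_cons ha w2
      have hSRne : Set.Nonempty {x | ∃ (r : V) (w : G.Walk r r),
          s(a, a') ∈ w.edges ∧ s(a, a') ∈ w.edges ∧ walkLen ℓ w = x} := by
        obtain ⟨w2⟩ := hG.preconnected a' a
        exact ⟨_, hmk w2⟩
      have hR : sInf {x | ∃ (r : V) (w : G.Walk r r),
          s(a, a') ∈ w.edges ∧ s(a, a') ∈ w.edges ∧ walkLen ℓ w = x}
          = ℓ a a' + gdist G ℓ a a' := by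
        refine le_antisymm ?_ (le_csInf hSRne hRlb)
        apply le_of_forall_pos_le_add
        intro ε hε
        obtain ⟨w2, hw2⟩ := exists_walk_lt (ℓ := ℓ) hG a' a hε
        have := csInf_le hSRbdd (hmk w2)
        linarith
      have hub : ∀ x ∈ {x | ∃ lam mu : ℝ, lam ∈ Set.Icc 0 (ℓ a a') ∧ mu ∈ Set.Icc 0 (ℓ a a') ∧
          pdist G ℓ (a, a', lam) (a, a', mu) = x},
          x ≤ (ℓ a a' + gdist G ℓ a a') / 2 := by
        rintro x ⟨lam, mu, ⟨hl0, hl1⟩, ⟨hm0, hm1⟩, rfl⟩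
        have p1 : pdist G ℓ (a, a', lam) (a, a', mu) ≤ |lam - mu| :=
          pdist_le_mem hnn _ _ hl0 hl1 hm0 hm1 (Or.inl (Or.inr ⟨rfl, rfl⟩))
        have p2 : pdist G ℓ (a, a', lam) (a, a', mu) ≤ lam + gdist G ℓ a a' + (ℓ a a' - mu) :=
          pdist_le_gdist hG hnn _ _ hl0 hl1 hm0 hm1 false true
        have p3 : pdist G ℓ (a, a', lam) (a, a', mu) ≤ (ℓ a a' - lam) + gdist G ℓ a' a + mu :=
          pdist_le_gdist hG hnn _ _ hl0 hl1 hm0 hm1 true false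
        rcases le_total lam mu with h | h
        · have habs : |lam - mu| = mu - lam := by rw [abs_of_nonpos (by linarith)]; ring
          linarith
        · have habs : |lam - mu| = lam - mu := abs_of_nonneg (by linarith)
          linarith
      have hl0 : (0:ℝ) ≤ (ℓ a a' - gdist G ℓ a a') / 4 := by linarith
      have hl1 : (ℓ a a' - gdist G ℓ a a') / 4 ≤ ℓ a a' := by linarith
      have hm0 : (0:ℝ) ≤ (3 * ℓ a a' + gdist G ℓ a a') / 4 := by linarith
      have hm1 : (3 * ℓ a a' + gdist G ℓ a a') / 4 ≤ ℓ a a' := by linarith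
      have habs : |(ℓ a a' - gdist G ℓ a a') / 4 - (3 * ℓ a a' + gdist G ℓ a a') / 4| = (ℓ a a' + gdist G ℓ a a') / 2 := by
        rw [abs_of_nonpos (by linarith)]; ring
      have hpeq : pdist G ℓ (a, a', (ℓ a a' - gdist G ℓ a a') / 4)
          (a, a', (3 * ℓ a a' + gdist G ℓ a a') / 4) = (ℓ a a' + gdist G ℓ a a') / 2 := by
        apply le_antisymm
        · exact le_trans
            (pdist_le_mem hnn _ _ hl0 hl1 hm0 hm1 (Or.inl (Or.inr ⟨rfl, rfl⟩)))
            (le_of_eq habs)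
        · apply le_pdist hG hnn
          · intro i j
            cases i <;> cases j
            · show _ ≤ (ℓ a a' - gdist G ℓ a a') / 4 + gdist G ℓ a a
                + (3 * ℓ a a' + gdist G ℓ a a') / 4
              rw [hzaa]; linarith
            · show _ ≤ (ℓ a a' - gdist G ℓ a a') / 4 + gdist G ℓ a a'
                + (ℓ a a' - (3 * ℓ a a' + gdist G ℓ a a') / 4)
              linarith
            · show _ ≤ (ℓ a a' - (ℓ a a' - gdist G ℓ a a') / 4) + gdist G ℓ a' a
                + (3 * ℓ a a' + gdist G ℓ a a') / 4
              rw [hgs]; linarith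
            · show _ ≤ (ℓ a a' - (ℓ a a' - gdist G ℓ a a') / 4) + gdist G ℓ a' a'
                + (ℓ a a' - (3 * ℓ a a' + gdist G ℓ a a') / 4)
              rw [hzbb]; linarith
          · intro _
            exact le_of_eq habs.symm
          · intro hcon
            exfalso
            have : a = a' ∧ a' = a := by simpa using hcon
            exact ha.ne this.1
      have hmemT : (ℓ a a' + gdist G ℓ a a') / 2 ∈ {x | ∃ lam mu : ℝ,
          lam ∈ Set.Icc 0 (ℓ a a') ∧ mu ∈ Set.Icc 0 (ℓ a a') ∧
          pdist G ℓ (a, a', lam) (a, a', mu) = x} :=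
        ⟨_, _, ⟨hl0, hl1⟩, ⟨hm0, hm1⟩, hpeq⟩
      have hsup : sSup {x | ∃ lam mu : ℝ, lam ∈ Set.Icc 0 (ℓ a a') ∧ mu ∈ Set.Icc 0 (ℓ a a') ∧
          pdist G ℓ (a, a', lam) (a, a', mu) = x} = (ℓ a a' + gdist G ℓ a a') / 2 :=
        le_antisymm (csSup_le ⟨_, hmemT⟩ hub) (le_csSup ⟨_, fun x hx => hub x hx⟩ hmemT)
      rw [hsup, hR]
    · subst h1; subst h2
      have hL2' : ℓ a' a = ℓ a a' := hsym a' a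
      have hd0 : 0 ≤ gdist G ℓ a a' := gdist_nonneg hG hnn a a'
      have hdL : gdist G ℓ a a' ≤ ℓ a a' := gdist_le_len hnn ha
      have hzaa : gdist G ℓ a a = 0 := gdist_self hG hnn a
      have hzbb : gdist G ℓ a' a' = 0 := gdist_self hG hnn a'
      have hgs : gdist G ℓ a' a = gdist G ℓ a a' := gdist_symm hG hsym hnn a' a
      have hRlb : ∀ x ∈ {x | ∃ (r : V) (w : G.Walk r r),
          s(a, a') ∈ w.edges ∧ s(a', a) ∈ w.edges ∧ walkLen ℓ w = x},
          ℓ a a' + gdist G ℓ a a' ≤ x := by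
        rintro x ⟨r, w, hea, -, rfl⟩
        exact closed_lb_same hG hsym hnn a a' w hea
      have hSRbdd : BddBelow {x | ∃ (r : V) (w : G.Walk r r),
          s(a, a') ∈ w.edges ∧ s(a', a) ∈ w.edges ∧ walkLen ℓ w = x} :=
        ⟨0, by rintro x ⟨r, w, -, -, rfl⟩; exact walkLen_nonneg hnn w⟩
      have hmk : ∀ w2 : G.Walk a' a, (ℓ a a' + walkLen ℓ w2) ∈
          {x | ∃ (r : V) (w : G.Walk r r),
            s(a, a') ∈ w.edges ∧ s(a', a) ∈ w.edges ∧ walkLen ℓ w = x} := by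
        intro w2
        refine ⟨a, Walk.cons ha w2, ?_, ?_, walkLen_cons ha w2⟩
        · rw [Walk.edges_cons]; exact List.mem_cons_self
        · rw [Walk.edges_cons, Sym2.eq_swap]; exact List.mem_cons_self
      have hSRne : Set.Nonempty {x | ∃ (r : V) (w : G.Walk r r),
          s(a, a') ∈ w.edges ∧ s(a', a) ∈ w.edges ∧ walkLen ℓ w = x} := by
        obtain ⟨w2⟩ := hG.preconnected a' a
        exact ⟨_, hmk w2⟩
      have hR : sInf {x | ∃ (r : V) (w : G.Walk r r),
          s(a, a') ∈ w.edges ∧ s(a', a) ∈ w.edges ∧ walkLen ℓ w = x}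
          = ℓ a a' + gdist G ℓ a a' := by
        refine le_antisymm ?_ (le_csInf hSRne hRlb)
        apply le_of_forall_pos_le_add
        intro ε hε
        obtain ⟨w2, hw2⟩ := exists_walk_lt (ℓ := ℓ) hG a' a hε
        have := csInf_le hSRbdd (hmk w2)
        linarith
      have hub : ∀ x ∈ {x | ∃ lam mu : ℝ, lam ∈ Set.Icc 0 (ℓ a a') ∧ mu ∈ Set.Icc 0 (ℓ a' a) ∧
          pdist G ℓ (a, a', lam) (a', a, mu) = x},
          x ≤ (ℓ a a' + gdist G ℓ a a') / 2 := by
        rintro x ⟨lam, mu, ⟨hl0, hl1⟩, ⟨hm0, hm1⟩, rfl⟩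
        have p1 : pdist G ℓ (a, a', lam) (a', a, mu) ≤ |lam - (ℓ a' a - mu)| :=
          pdist_le_mem hnn _ _ hl0 hl1 hm0 hm1 (Or.inr ⟨rfl, rfl⟩)
        have p2 : pdist G ℓ (a, a', lam) (a', a, mu) ≤ lam + gdist G ℓ a a' + mu :=
          pdist_le_gdist hG hnn _ _ hl0 hl1 hm0 hm1 false false
        have p3 : pdist G ℓ (a, a', lam) (a', a, mu)
            ≤ (ℓ a a' - lam) + gdist G ℓ a' a + (ℓ a' a - mu) :=
          pdist_le_gdist hG hnn _ _ hl0 hl1 hm0 hm1 true true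
        rcases le_total lam (ℓ a' a - mu) with h | h
        · have habs : |lam - (ℓ a' a - mu)| = (ℓ a' a - mu) - lam := by
            rw [abs_of_nonpos (by linarith)]; ring
          rw [habs] at p1
          linarith
        · have habs : |lam - (ℓ a' a - mu)| = lam - (ℓ a' a - mu) :=
            abs_of_nonneg (by linarith)
          rw [habs] at p1
          linarith
      have hl0 : (0:ℝ) ≤ (ℓ a a' - gdist G ℓ a a') / 4 := by linarith
      have hl1 : (ℓ a a' - gdist G ℓ a a') / 4 ≤ ℓ a a' := by linarith
      have hm1 : (ℓ a a' - gdist G ℓ a a') / 4 ≤ ℓ a' a := by linarith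
      have habs2 : |(ℓ a a' - gdist G ℓ a a') / 4 - (ℓ a' a - (ℓ a a' - gdist G ℓ a a') / 4)| = (ℓ a a' + gdist G ℓ a a') / 2 := by
        rw [hL2', abs_of_nonpos (by linarith)]; ring
      have hpeq : pdist G ℓ (a, a', (ℓ a a' - gdist G ℓ a a') / 4)
          (a', a, (ℓ a a' - gdist G ℓ a a') / 4) = (ℓ a a' + gdist G ℓ a a') / 2 := by
        apply le_antisymm
        · exact le_trans
            (pdist_le_mem hnn _ _ hl0 hl1 hl0 hm1 (Or.inr ⟨rfl, rfl⟩))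
            (le_of_eq habs2)
        · apply le_pdist hG hnn
          · intro i j
            cases i <;> cases j
            · show _ ≤ (ℓ a a' - gdist G ℓ a a') / 4 + gdist G ℓ a a'
                + (ℓ a a' - gdist G ℓ a a') / 4
              linarith
            · show _ ≤ (ℓ a a' - gdist G ℓ a a') / 4 + gdist G ℓ a a
                + (ℓ a' a - (ℓ a a' - gdist G ℓ a a') / 4)
              rw [hzaa, hL2']; linarith
            · show _ ≤ (ℓ a a' - (ℓ a a' - gdist G ℓ a a') / 4) + gdist G ℓ a' a'
                + (ℓ a a' - gdist G ℓ a a') / 4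
              rw [hzbb]; linarith
            · show _ ≤ (ℓ a a' - (ℓ a a' - gdist G ℓ a a') / 4) + gdist G ℓ a' a
                + (ℓ a' a - (ℓ a a' - gdist G ℓ a a') / 4)
              rw [hgs, hL2']; linarith
          · intro hcon
            exfalso
            have : a = a' ∧ a' = a := by simpa using hcon
            exact ha.ne this.1
          · intro _
            exact le_of_eq habs2.symm
      have hmemT : (ℓ a a' + gdist G ℓ a a') / 2 ∈ {x | ∃ lam mu : ℝ,
          lam ∈ Set.Icc 0 (ℓ a a') ∧ mu ∈ Set.Icc 0 (ℓ a' a) ∧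
          pdist G ℓ (a, a', lam) (a', a, mu) = x} :=
        ⟨_, _, ⟨hl0, hl1⟩, ⟨hl0, hm1⟩, hpeq⟩
      have hsup : sSup {x | ∃ lam mu : ℝ, lam ∈ Set.Icc 0 (ℓ a a') ∧ mu ∈ Set.Icc 0 (ℓ a' a) ∧
          pdist G ℓ (a, a', lam) (a', a, mu) = x} = (ℓ a a' + gdist G ℓ a a') / 2 :=
        le_antisymm (csSup_le ⟨_, hmemT⟩ hub) (le_csSup ⟨_, fun x hx => hub x hx⟩ hmemT)
      rw [hsup, hR]
  · -- the two edges are distinct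
    have t_aa : gdist G ℓ a a' ≤ ℓ a a' := gdist_le_len hnn ha
    have t_aa' : gdist G ℓ a' a ≤ ℓ a a' := by
      rw [gdist_symm hG hsym hnn a' a]; exact t_aa
    have t_bb : gdist G ℓ b b' ≤ ℓ b b' := gdist_le_len hnn hb
    have t_bb' : gdist G ℓ b' b ≤ ℓ b b' := by
      rw [gdist_symm hG hsym hnn b' b]; exact t_bb
    have t13 : gdist G ℓ a b ≤ ℓ a a' + gdist G ℓ a' b :=
      (gdist_triangle hG hnn a a' b).trans (by linarith)
    have t31 : gdist G ℓ a' b ≤ ℓ a a' + gdist G ℓ a b :=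
      (gdist_triangle hG hnn a' a b).trans (by linarith)
    have t12 : gdist G ℓ a b' ≤ gdist G ℓ a b + ℓ b b' :=
      (gdist_triangle hG hnn a b b').trans (by linarith)
    have t21 : gdist G ℓ a b ≤ gdist G ℓ a b' + ℓ b b' :=
      (gdist_triangle hG hnn a b' b).trans (by linarith)
    have t34 : gdist G ℓ a' b' ≤ gdist G ℓ a' b + ℓ b b' :=
      (gdist_triangle hG hnn a' b b').trans (by linarith)
    have t43 : gdist G ℓ a' b ≤ gdist G ℓ a' b' + ℓ b b' :=
      (gdist_triangle hG hnn a' b' b).trans (by linarith)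
    have t24 : gdist G ℓ a' b' ≤ gdist G ℓ a b' + ℓ a a' :=
      (gdist_triangle hG hnn a' a b').trans (by linarith)
    have t42 : gdist G ℓ a b' ≤ gdist G ℓ a' b' + ℓ a a' :=
      (gdist_triangle hG hnn a a' b').trans (by linarith)
    have hRlb : ∀ x ∈ {x | ∃ (r : V) (w : G.Walk r r),
        s(a, a') ∈ w.edges ∧ s(b, b') ∈ w.edges ∧ walkLen ℓ w = x},
        ℓ a a' + ℓ b b' +
          min (gdist G ℓ a b' + gdist G ℓ a' b) (gdist G ℓ a b + gdist G ℓ a' b') ≤ x := by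
      rintro x ⟨r, w, hea, heb, rfl⟩
      exact closed_lb_distinct hG hsym hnn a a' b b' hsame w hea heb
    have hSRbdd : BddBelow {x | ∃ (r : V) (w : G.Walk r r),
        s(a, a') ∈ w.edges ∧ s(b, b') ∈ w.edges ∧ walkLen ℓ w = x} :=
      ⟨0, by rintro x ⟨r, w, -, -, rfl⟩; exact walkLen_nonneg hnn w⟩
    have hmk1 : ∀ (w1 : G.Walk a' b) (w2 : G.Walk b' a),
        (ℓ a a' + (walkLen ℓ w1 + (ℓ b b' + walkLen ℓ w2))) ∈
        {x | ∃ (r : V) (w : G.Walk r r),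
          s(a, a') ∈ w.edges ∧ s(b, b') ∈ w.edges ∧ walkLen ℓ w = x} := by
      intro w1 w2
      refine ⟨a, Walk.cons ha (w1.append (Walk.cons hb w2)), ?_, ?_, ?_⟩
      · rw [Walk.edges_cons]; exact List.mem_cons_self
      · rw [Walk.edges_cons]
        refine List.mem_cons_of_mem _ ?_
        rw [Walk.edges_append]
        refine List.mem_append_right _ ?_
        rw [Walk.edges_cons]; exact List.mem_cons_self
      · rw [walkLen_cons, walkLen_append, walkLen_cons]
    have hmk2 : ∀ (w1 : G.Walk a' b') (w2 : G.Walk b a),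
        (ℓ a a' + (walkLen ℓ w1 + (ℓ b' b + walkLen ℓ w2))) ∈
        {x | ∃ (r : V) (w : G.Walk r r),
          s(a, a') ∈ w.edges ∧ s(b, b') ∈ w.edges ∧ walkLen ℓ w = x} := by
      intro w1 w2
      refine ⟨a, Walk.cons ha (w1.append (Walk.cons hb.symm w2)), ?_, ?_, ?_⟩
      · rw [Walk.edges_cons]; exact List.mem_cons_self
      · rw [Walk.edges_cons]
        refine List.mem_cons_of_mem _ ?_
        rw [Walk.edges_append]
        refine List.mem_append_right _ ?_
        rw [Walk.edges_cons, Sym2.eq_swap]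
        exact List.mem_cons_self
      · rw [walkLen_cons, walkLen_append, walkLen_cons]
    have hSRne : Set.Nonempty {x | ∃ (r : V) (w : G.Walk r r),
        s(a, a') ∈ w.edges ∧ s(b, b') ∈ w.edges ∧ walkLen ℓ w = x} := by
      obtain ⟨w1⟩ := hG.preconnected a' b
      obtain ⟨w2⟩ := hG.preconnected b' a
      exact ⟨_, hmk1 w1 w2⟩
    rcases le_total (gdist G ℓ a b' + gdist G ℓ a' b) (gdist G ℓ a b + gdist G ℓ a' b')
      with hA | hA
    · -- the minimum is d2 + d3
      have hR : sInf {x | ∃ (r : V) (w : G.Walk r r),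
          s(a, a') ∈ w.edges ∧ s(b, b') ∈ w.edges ∧ walkLen ℓ w = x}
          = ℓ a a' + ℓ b b' + (gdist G ℓ a b' + gdist G ℓ a' b) := by
        refine le_antisymm ?_ (le_csInf hSRne ?_)
        · apply le_of_forall_pos_le_add
          intro ε hε
          obtain ⟨w1, hw1⟩ := exists_walk_lt (ℓ := ℓ) hG a' b (half_pos hε)
          obtain ⟨w2, hw2⟩ := exists_walk_lt (ℓ := ℓ) hG b' a (half_pos hε)
          have := csInf_le hSRbdd (hmk1 w1 w2)
          have hs1 : gdist G ℓ b' a = gdist G ℓ a b' := gdist_symm hG hsym hnn b' a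
          linarith
        · intro x hx
          have := hRlb x hx
          rw [min_eq_left hA] at this
          exact this
      obtain ⟨lam, mu, f0, f1, f2, f3, e1, e2, i1, i2⟩ :=
        feas (ℓ a a') (ℓ b b') (gdist G ℓ a b) (gdist G ℓ a b') (gdist G ℓ a' b)
          (gdist G ℓ a' b') hL1 hL2 t13 t31 t12 t21 t34 t43 t24 t42 hA
      have hpeq : pdist G ℓ (a, a', lam) (b, b', mu)
          = (ℓ a a' + ℓ b b' + gdist G ℓ a b' + gdist G ℓ a' b) / 2 := by
        apply le_antisymm
        · have p : pdist G ℓ (a, a', lam) (b, b', mu)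
              ≤ (ℓ a a' - lam) + gdist G ℓ a' b + mu :=
            pdist_le_gdist hG hnn _ _ f0 f1 f2 f3 true false
          linarith [e2]
        · apply le_pdist hG hnn
          · intro i j
            cases i <;> cases j
            · show _ ≤ lam + gdist G ℓ a b + mu
              linarith [i1]
            · show _ ≤ lam + gdist G ℓ a b' + (ℓ b b' - mu)
              linarith [e1]
            · show _ ≤ (ℓ a a' - lam) + gdist G ℓ a' b + mu
              linarith [e2]
            · show _ ≤ (ℓ a a' - lam) + gdist G ℓ a' b' + (ℓ b b' - mu)
              linarith [i2]
          · intro hcon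
            exfalso
            apply hsame
            have : a = b ∧ a' = b' := by simpa using hcon
            rw [this.1, this.2]
          · intro hcon
            exfalso
            apply hsame
            have : a = b' ∧ a' = b := by simpa using hcon
            rw [this.1, this.2]
            exact Sym2.eq_swap
      have hub : ∀ x ∈ {x | ∃ lam mu : ℝ, lam ∈ Set.Icc 0 (ℓ a a') ∧
          mu ∈ Set.Icc 0 (ℓ b b') ∧ pdist G ℓ (a, a', lam) (b, b', mu) = x},
          x ≤ (ℓ a a' + ℓ b b' + gdist G ℓ a b' + gdist G ℓ a' b) / 2 := by
        rintro x ⟨lam', mu', ⟨g0, g1⟩, ⟨g2, g3⟩, rfl⟩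
        have p1 : pdist G ℓ (a, a', lam') (b, b', mu')
            ≤ lam' + gdist G ℓ a b' + (ℓ b b' - mu') :=
          pdist_le_gdist hG hnn _ _ g0 g1 g2 g3 false true
        have p2 : pdist G ℓ (a, a', lam') (b, b', mu')
            ≤ (ℓ a a' - lam') + gdist G ℓ a' b + mu' :=
          pdist_le_gdist hG hnn _ _ g0 g1 g2 g3 true false
        linarith
      have hmemT : (ℓ a a' + ℓ b b' + gdist G ℓ a b' + gdist G ℓ a' b) / 2 ∈
          {x | ∃ lam mu : ℝ, lam ∈ Set.Icc 0 (ℓ a a') ∧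
            mu ∈ Set.Icc 0 (ℓ b b') ∧ pdist G ℓ (a, a', lam) (b, b', mu) = x} :=
        ⟨_, _, ⟨f0, f1⟩, ⟨f2, f3⟩, hpeq⟩
      have hsup : sSup {x | ∃ lam mu : ℝ, lam ∈ Set.Icc 0 (ℓ a a') ∧
          mu ∈ Set.Icc 0 (ℓ b b') ∧ pdist G ℓ (a, a', lam) (b, b', mu) = x}
          = (ℓ a a' + ℓ b b' + gdist G ℓ a b' + gdist G ℓ a' b) / 2 :=
        le_antisymm (csSup_le ⟨_, hmemT⟩ hub) (le_csSup ⟨_, fun x hx => hub x hx⟩ hmemT)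
      rw [hsup, hR]
      ring
    · -- the minimum is d1 + d4
      have hR : sInf {x | ∃ (r : V) (w : G.Walk r r),
          s(a, a') ∈ w.edges ∧ s(b, b') ∈ w.edges ∧ walkLen ℓ w = x}
          = ℓ a a' + ℓ b b' + (gdist G ℓ a b + gdist G ℓ a' b') := by
        refine le_antisymm ?_ (le_csInf hSRne ?_)
        · apply le_of_forall_pos_le_add
          intro ε hε
          obtain ⟨w1, hw1⟩ := exists_walk_lt (ℓ := ℓ) hG a' b' (half_pos hε)
          obtain ⟨w2, hw2⟩ := exists_walk_lt (ℓ := ℓ) hG b a (half_pos hε)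
          have := csInf_le hSRbdd (hmk2 w1 w2)
          have hbb : ℓ b' b = ℓ b b' := hsym b' b
          have hs2 : gdist G ℓ b a = gdist G ℓ a b := gdist_symm hG hsym hnn b a
          linarith
        · intro x hx
          have := hRlb x hx
          rw [min_eq_right hA] at this
          exact this
      have u1 : gdist G ℓ a b' ≤ ℓ a a' + gdist G ℓ a' b' := by linarith
      have u2 : gdist G ℓ a' b' ≤ ℓ a a' + gdist G ℓ a b' := by linarith
      have u3 : gdist G ℓ a' b ≤ gdist G ℓ a b + ℓ a a' := by linarith
      have u4 : gdist G ℓ a b ≤ gdist G ℓ a' b + ℓ a a' := by linarith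
      obtain ⟨lam, mu', f0, f1, f2, f3, e1, e2, i1, i2⟩ :=
        feas (ℓ a a') (ℓ b b') (gdist G ℓ a b') (gdist G ℓ a b) (gdist G ℓ a' b')
          (gdist G ℓ a' b) hL1 hL2 u1 u2 t21 t12 t43 t34 u3 u4 hA
      have hm0 : (0:ℝ) ≤ ℓ b b' - mu' := by linarith
      have hm1 : ℓ b b' - mu' ≤ ℓ b b' := by linarith
      have hpeq : pdist G ℓ (a, a', lam) (b, b', ℓ b b' - mu')
          = (ℓ a a' + ℓ b b' + gdist G ℓ a b + gdist G ℓ a' b') / 2 := by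
        apply le_antisymm
        · have p : pdist G ℓ (a, a', lam) (b, b', ℓ b b' - mu')
              ≤ lam + gdist G ℓ a b + (ℓ b b' - mu') :=
            pdist_le_gdist hG hnn _ _ f0 f1 hm0 hm1 false false
          linarith [e1]
        · apply le_pdist hG hnn
          · intro i j
            cases i <;> cases j
            · show _ ≤ lam + gdist G ℓ a b + (ℓ b b' - mu')
              linarith [e1]
            · show _ ≤ lam + gdist G ℓ a b' + (ℓ b b' - (ℓ b b' - mu'))
              linarith [i1]
            · show _ ≤ (ℓ a a' - lam) + gdist G ℓ a' b + (ℓ b b' - mu')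
              linarith [i2]
            · show _ ≤ (ℓ a a' - lam) + gdist G ℓ a' b' + (ℓ b b' - (ℓ b b' - mu'))
              linarith [e2]
          · intro hcon
            exfalso
            apply hsame
            have : a = b ∧ a' = b' := by simpa using hcon
            rw [this.1, this.2]
          · intro hcon
            exfalso
            apply hsame
            have : a = b' ∧ a' = b := by simpa using hcon
            rw [this.1, this.2]
            exact Sym2.eq_swap
      have hub : ∀ x ∈ {x | ∃ lam mu : ℝ, lam ∈ Set.Icc 0 (ℓ a a') ∧
          mu ∈ Set.Icc 0 (ℓ b b') ∧ pdist G ℓ (a, a', lam) (b, b', mu) = x},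
          x ≤ (ℓ a a' + ℓ b b' + gdist G ℓ a b + gdist G ℓ a' b') / 2 := by
        rintro x ⟨lam', mu'', ⟨g0, g1⟩, ⟨g2, g3⟩, rfl⟩
        have p1 : pdist G ℓ (a, a', lam') (b, b', mu'')
            ≤ lam' + gdist G ℓ a b + mu'' :=
          pdist_le_gdist hG hnn _ _ g0 g1 g2 g3 false false
        have p2 : pdist G ℓ (a, a', lam') (b, b', mu'')
            ≤ (ℓ a a' - lam') + gdist G ℓ a' b' + (ℓ b b' - mu'') :=
          pdist_le_gdist hG hnn _ _ g0 g1 g2 g3 true true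
        linarith
      have hmemT : (ℓ a a' + ℓ b b' + gdist G ℓ a b + gdist G ℓ a' b') / 2 ∈
          {x | ∃ lam mu : ℝ, lam ∈ Set.Icc 0 (ℓ a a') ∧
            mu ∈ Set.Icc 0 (ℓ b b') ∧ pdist G ℓ (a, a', lam) (b, b', mu) = x} :=
        ⟨_, _, ⟨f0, f1⟩, ⟨hm0, hm1⟩, hpeq⟩
      have hsup : sSup {x | ∃ lam mu : ℝ, lam ∈ Set.Icc 0 (ℓ a a') ∧
          mu ∈ Set.Icc 0 (ℓ b b') ∧ pdist G ℓ (a, a', lam) (b, b', mu) = x}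
          = (ℓ a a' + ℓ b b' + gdist G ℓ a b + gdist G ℓ a' b') / 2 :=
        le_antisymm (csSup_le ⟨_, hmemT⟩ hub) (le_csSup ⟨_, fun x hx => hub x hx⟩ hmemT)
      rw [hsup, hR]
      ring
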